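/- For 0 < x ≤ 4 with x ≠ values making the matrix singular, the eigenvalues λ_{1,2} = (±x√(x² - 16) + x - 4)/(-2x - 4) of the P¹-DG matrix (a = 0) are complex conjugates, and |λ_{1,2}| < 1 if and only if -4x⁴ - 8x² < 0, which holds for all x > 0. -/

import Mathlib

open Complex

/-- for 0 < x ≤ 4 the eigenvalues λ₁,₂ = (±x√(x²-16) + x - 4)/(-2x-4)
(with √(x²-16) = i√(16-x²)) are complex conjugates, and |λ₁,₂| < 1 iff
-4x⁴ - 8x² < 0, which holds for all x > 0. -/
theorem stmt_10 (x : ℝ) (hx0 : 0 < x) (hx4 : x ≤ 4)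
    (μ₁ μ₂ : ℂ)
    (hμ₁ : μ₁ = ((x : ℂ) * (Complex.I * (Real.sqrt (16 - x ^ 2) : ℝ)) + x - 4) / (-2 * x - 4))
    (hμ₂ : μ₂ = (-((x : ℂ) * (Complex.I * (Real.sqrt (16 - x ^ 2) : ℝ))) + x - 4) / (-2 * x - 4)) :
    μ₂ = (starRingEnd ℂ) μ₁ ∧
    ‖μ₂‖ = ‖μ₁‖ ∧
    (‖μ₁‖ < 1 ↔ -4 * x ^ 4 - 8 * x ^ 2 < 0) ∧
    (∀ y : ℝ, 0 < y → -4 * y ^ 4 - 8 * y ^ 2 < 0) := by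
  set s := Real.sqrt (16 - x ^ 2) with hsdef
  have hs : s ^ 2 = 16 - x ^ 2 := Real.sq_sqrt (by nlinarith)
  have hconj : μ₂ = (starRingEnd ℂ) μ₁ := by
    rw [hμ₁, hμ₂, map_div₀]
    simp [map_sub, map_add, map_mul, map_ofNat, Complex.conj_I, Complex.conj_ofReal]
  have hsq : ‖μ₁‖ ^ 2 = ((x-4)^2 + x^2*(16-x^2)) / (2*x+4)^2 := by
    rw [hμ₁, Complex.sq_norm, Complex.normSq_div]
    simp [Complex.normSq_apply]
    rw [div_eq_div_iff (by nlinarith) (by positivity)]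
    linear_combination (x^2*(2*x+4)^2) * hs
  have hlt : ‖μ₁‖ < 1 := by
    have h2 : ‖μ₁‖ ^ 2 < 1 := by
      rw [hsq, div_lt_one (by positivity)]
      nlinarith [sq_nonneg (x-1), sq_nonneg (x-3), sq_nonneg x, hx0.le]
    nlinarith [norm_nonneg μ₁]
  refine ⟨hconj, by rw [hconj, Complex.norm_conj], ?_, ?_⟩
  · constructor
    · intro _
      nlinarith
    · intro _
      exact hlt
  · intro y hy
    nlinarith
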